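/- For every b > 0 and θ ∈ ℝ, the partial transpose of ϱ_{b,θ} equals ϱ_{b,θ} itself; in particular ϱ_{b,θ} is a PPT matrix (both ϱ_{b,θ} and its partial transpose are positive semidefinite). -/

import Mathlib

open Matrix Complex ComplexOrder

noncomputable def pTheta (θ : ℝ) : ℝ :=
  max (max (2 * Real.cos (θ - 2 * Real.pi / 3)) (2 * Real.cos θ))
    (2 * Real.cos (θ + 2 * Real.pi / 3))

noncomputable def rho (b θ : ℝ) : Matrix (Fin 9) (Fin 9) ℂ :=
  let p : ℂ := (pTheta θ : ℂ)
  let e : ℂ := Complex.exp (θ * Complex.I)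
  let f : ℂ := Complex.exp (-θ * Complex.I)
  !![p, 0, 0, 0, -e, 0, 0, 0, -f;
     0, 1/(b:ℂ), 0, -f, 0, 0, 0, 0, 0;
     0, 0, (b:ℂ), 0, 0, 0, -e, 0, 0;
     0, -e, 0, (b:ℂ), 0, 0, 0, 0, 0;
     -f, 0, 0, 0, p, 0, 0, 0, -e;
     0, 0, 0, 0, 0, 1/(b:ℂ), 0, -f, 0;
     0, 0, -f, 0, 0, 0, 1/(b:ℂ), 0, 0;
     0, 0, 0, 0, 0, -e, 0, (b:ℂ), 0;
     -e, 0, 0, 0, -f, 0, 0, 0, p]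

noncomputable def partialTranspose (ρ : Matrix (Fin 9) (Fin 9) ℂ) : Matrix (Fin 9) (Fin 9) ℂ :=
  Matrix.of fun i j =>
    ρ (finProdFinEquiv (((finProdFinEquiv (m := 3) (n := 3)).symm j).1,
        ((finProdFinEquiv (m := 3) (n := 3)).symm i).2))
      (finProdFinEquiv (((finProdFinEquiv (m := 3) (n := 3)).symm i).1,
        ((finProdFinEquiv (m := 3) (n := 3)).symm j).2))

section auxconsval
variable {α : Type*} {m : ℕ}
@[simp] lemma aux_cons_val_five (x : α) (u : Fin m.succ.succ.succ.succ.succ → α) :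
    Matrix.vecCons x u 5 = Matrix.vecHead (Matrix.vecTail (Matrix.vecTail (Matrix.vecTail
      (Matrix.vecTail u)))) := rfl
@[simp] lemma aux_cons_val_six (x : α) (u : Fin m.succ.succ.succ.succ.succ.succ → α) :
    Matrix.vecCons x u 6 = Matrix.vecHead (Matrix.vecTail (Matrix.vecTail (Matrix.vecTail
      (Matrix.vecTail (Matrix.vecTail u))))) := rfl
@[simp] lemma aux_cons_val_seven (x : α) (u : Fin m.succ.succ.succ.succ.succ.succ.succ → α) :
    Matrix.vecCons x u 7 = Matrix.vecHead (Matrix.vecTail (Matrix.vecTail (Matrix.vecTail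
      (Matrix.vecTail (Matrix.vecTail (Matrix.vecTail u)))))) := rfl
@[simp] lemma aux_cons_val_eight (x : α) (u : Fin m.succ.succ.succ.succ.succ.succ.succ.succ → α) :
    Matrix.vecCons x u 8 = Matrix.vecHead (Matrix.vecTail (Matrix.vecTail (Matrix.vecTail
      (Matrix.vecTail (Matrix.vecTail (Matrix.vecTail (Matrix.vecTail u))))))) := rfl
end auxconsval

lemma aux_sum_univ_nine {β : Type*} [AddCommMonoid β] (f : Fin 9 → β) :
    ∑ i, f i = f 0 + f 1 + f 2 + f 3 + f 4 + f 5 + f 6 + f 7 + f 8 := by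
  rw [Fin.sum_univ_castSucc, Fin.sum_univ_eight]
  rfl

lemma aux_q3_id (p e f w x0 x4 x8 y0 y4 y8 : ℂ) (hw : w^2 + w + 1 = 0) :
    (p - (e + f)) * ((y0 + y4 + y8) * (x0 + x4 + x8))
      + (p - (e*w + f*w^2)) * ((y0 + w*y4 + w^2*y8) * (x0 + w^2*x4 + w*x8))
      + (p - (e*w^2 + f*w)) * ((y0 + w^2*y4 + w*y8) * (x0 + w*x4 + w^2*x8))
    = 3 * (p*(y0*x0 + y4*x4 + y8*x8) - e*(y0*x4 + y4*x8 + y8*x0)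
        - f*(y4*x0 + y8*x4 + y0*x8)) := by
  linear_combination ((-1)*f*x8*y8 + (-1)*f*x8*y4 + (2)*f*x8*y0 + (2)*f*x4*y8 + (-1)*f*x4*y4 + (-1)*f*x4*y0 + (-1)*f*x0*y8 + (2)*f*x0*y4 + (-1)*f*x0*y0 + (1)*f*w*x8*y8 + (1)*f*w*x8*y4 + (-2)*f*w*x8*y0 + (-2)*f*w*x4*y8 + (1)*f*w*x4*y4 + (1)*f*w*x4*y0 + (1)*f*w*x0*y8 + (-2)*f*w*x0*y4 + (-1)*f*w^2*x4*y0 + (-1)*f*w^2*x0*y8 + (-1)*f*w^3*x8*y8 + (-1)*f*w^3*x8*y4 + (1)*f*w^3*x4*y8 + (-1)*f*w^3*x4*y4 + (-1)*f*w^4*x4*y8 + (-1)*e*x8*y8 + (2)*e*x8*y4 + (-1)*e*x8*y0 + (-1)*e*x4*y8 + (-1)*e*x4*y4 + (2)*e*x4*y0 + (2)*e*x0*y8 + (-1)*e*x0*y4 + (-1)*e*x0*y0 + (1)*e*w*x8*y8 + (-2)*e*w*x8*y4 + (1)*e*w*x8*y0 + (1)*e*w*x4*y8 + (1)*e*w*x4*y4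 + (-2)*e*w*x4*y0 + (-2)*e*w*x0*y8 + (1)*e*w*x0*y4 + (-1)*e*w^2*x8*y0 + (-1)*e*w^2*x0*y4 + (-1)*e*w^3*x8*y8 + (1)*e*w^3*x8*y4 + (-1)*e*w^3*x4*y8 + (-1)*e*w^3*x4*y4 + (-1)*e*w^4*x8*y4 + (-2)*p*x8*y8 + (1)*p*x8*y4 + (1)*p*x8*y0 + (1)*p*x4*y8 + (-2)*p*x4*y4 + (1)*p*x4*y0 + (1)*p*x0*y8 + (1)*p*x0*y4 + (2)*p*w*x8*y8 + (-1)*p*w*x8*y4 + (-1)*p*w*x4*y8 + (2)*p*w*x4*y4 + (1)*p*w^2*x8*y4 + (1)*p*w^2*x4*y8) * hw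

lemma aux_htc (s : ℝ) :
    Complex.exp (s * Complex.I) + Complex.exp (-s * Complex.I) = ((2 * Real.cos s : ℝ) : ℂ) := by
  rw [show (-(s:ℂ) * Complex.I) = ((-s : ℝ) : ℂ) * Complex.I by push_cast; ring,
    Complex.exp_mul_I, Complex.exp_mul_I]
  push_cast
  simp only [Complex.cos_neg, Complex.sin_neg, ← Complex.ofReal_cos]
  ring

lemma aux_q3_nonneg (θ : ℝ) (x0 x4 x8 : ℂ) :
    0 ≤ (pTheta θ : ℂ) *
          ((starRingEnd ℂ) x0 * x0 + (starRingEnd ℂ) x4 * x4 + (starRingEnd ℂ) x8 * x8)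
        - Complex.exp (θ * Complex.I) *
          ((starRingEnd ℂ) x0 * x4 + (starRingEnd ℂ) x4 * x8 + (starRingEnd ℂ) x8 * x0)
        - Complex.exp (-θ * Complex.I) *
          ((starRingEnd ℂ) x4 * x0 + (starRingEnd ℂ) x8 * x4 + (starRingEnd ℂ) x0 * x8) := by
  set t : ℝ := 2 * Real.pi / 3 with ht
  set e : ℂ := Complex.exp (θ * Complex.I) with he
  set f : ℂ := Complex.exp (-θ * Complex.I) with hf
  set ω : ℂ := Complex.exp ((t : ℝ) * Complex.I) with hω'
  have hω3 : ω ^ 3 = 1 := by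
    rw [hω', ← Complex.exp_nat_mul,
      show ((3:ℕ):ℂ) * ((t:ℝ) * Complex.I) = 2 * (Real.pi:ℂ) * Complex.I by
        rw [ht]; push_cast; ring,
      Complex.exp_two_pi_mul_I]
  have hω1 : ω ≠ 1 := by
    intro h
    have him := congrArg Complex.im h
    rw [hω'] at him
    simp [Complex.exp_ofReal_mul_I_im] at him
    have hπ := Real.pi_pos
    have : 0 < Real.sin t := Real.sin_pos_of_pos_of_lt_pi (by rw [ht]; linarith)
      (by rw [ht]; linarith)
    rw [him] at this; exact lt_irrefl 0 this
  have hω : ω ^ 2 + ω + 1 = 0 := by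
    have h := mul_eq_zero.mp (show (ω - 1) * (ω^2 + ω + 1) = 0 by linear_combination hω3)
    rcases h with h1 | h2
    · exact absurd (sub_eq_zero.mp h1) hω1
    · exact h2
  have hωne : ω ≠ 0 := by rw [hω']; exact Complex.exp_ne_zero _
  have hcω : (starRingEnd ℂ) ω = ω ^ 2 := by
    rw [hω', ← Complex.exp_conj, _root_.map_mul, Complex.conj_ofReal, Complex.conj_I, mul_neg,
      Complex.exp_neg]
    rw [← hω']
    field_simp [hωne]
    linear_combination (-1 : ℂ) * hω3
  have hcω2 : (starRingEnd ℂ) (ω ^ 2) = ω := by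
    rw [_root_.map_pow, hcω]
    linear_combination ω * hω3
  have hcfe : (starRingEnd ℂ) e = f := by
    rw [he, hf, ← Complex.exp_conj, _root_.map_mul, Complex.conj_ofReal, Complex.conj_I]
    ring_nf
  have hcef : (starRingEnd ℂ) f = e := by
    rw [he, hf, ← Complex.exp_conj, _root_.map_mul, _root_.map_neg, Complex.conj_ofReal, Complex.conj_I]
    ring_nf
  have hc0 : e + f = ((2 * Real.cos θ : ℝ) : ℂ) := aux_htc θ
  have hz1 : e * ω = Complex.exp (((θ + t : ℝ) : ℂ) * Complex.I) := by
    rw [he, hω', ← Complex.exp_add]; congr 1; push_cast; ring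
  have hc1 : e * ω + f * ω ^ 2 = ((2 * Real.cos (θ + t) : ℝ) : ℂ) := by
    have h2 : f * ω ^ 2 = Complex.exp (-((θ + t : ℝ) : ℂ) * Complex.I) := by
      rw [← hcfe, ← hcω, ← _root_.map_mul, hz1, ← Complex.exp_conj, _root_.map_mul, Complex.conj_ofReal,
        Complex.conj_I]
      ring_nf
    rw [hz1, h2, ← aux_htc (θ + t)]
  have hc2 : e * ω ^ 2 + f * ω = ((2 * Real.cos (θ - t) : ℝ) : ℂ) := by
    have h1 : f * ω = Complex.exp (((t - θ : ℝ) : ℂ) * Complex.I) := by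
      rw [hf, hω', ← Complex.exp_add]; congr 1; push_cast; ring
    have h2 : e * ω ^ 2 = Complex.exp (-((t - θ : ℝ) : ℂ) * Complex.I) := by
      rw [← hcef, ← hcω, ← _root_.map_mul, h1, ← Complex.exp_conj, _root_.map_mul, Complex.conj_ofReal,
        Complex.conj_I]
      ring_nf
    rw [show θ - t = -(t - θ) by ring, Real.cos_neg, h2, h1, add_comm, ← aux_htc (t - θ)]
  have hp0 : 2 * Real.cos θ ≤ pTheta θ :=
    le_trans (le_max_right _ _) (le_max_left _ _)
  have hp1 : 2 * Real.cos (θ + t) ≤ pTheta θ := le_max_right _ _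
  have hp2 : 2 * Real.cos (θ - t) ≤ pTheta θ :=
    le_trans (le_max_left _ _) (le_max_left _ _)
  have key : ∀ c : ℝ, c ≤ pTheta θ → ∀ u : ℂ,
      (0:ℂ) ≤ ((pTheta θ : ℂ) - ((c : ℝ) : ℂ)) * ((starRingEnd ℂ) u * u) := by
    intro c hcle u
    have h1 : ((pTheta θ : ℂ) - ((c : ℝ) : ℂ)) * ((starRingEnd ℂ) u * u)
        = (((pTheta θ - c) * Complex.normSq u : ℝ) : ℂ) := by
      rw [← Complex.normSq_eq_conj_mul_self]; push_cast; ring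
    rw [h1, Complex.zero_le_real]
    exact mul_nonneg (by linarith) (Complex.normSq_nonneg u)
  have hid := aux_q3_id ((pTheta θ : ℂ)) e f ω x0 x4 x8
    ((starRingEnd ℂ) x0) ((starRingEnd ℂ) x4) ((starRingEnd ℂ) x8) hω
  rw [hc0, hc1, hc2,
    show (starRingEnd ℂ) x0 + (starRingEnd ℂ) x4 + (starRingEnd ℂ) x8
        = (starRingEnd ℂ) (x0 + x4 + x8) by rw [_root_.map_add, _root_.map_add],
    show (starRingEnd ℂ) x0 + ω * (starRingEnd ℂ) x4 + ω^2 * (starRingEnd ℂ) x8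
        = (starRingEnd ℂ) (x0 + ω^2*x4 + ω*x8) by
      rw [_root_.map_add, _root_.map_add, _root_.map_mul, _root_.map_mul, hcω2, hcω],
    show (starRingEnd ℂ) x0 + ω^2 * (starRingEnd ℂ) x4 + ω * (starRingEnd ℂ) x8
        = (starRingEnd ℂ) (x0 + ω*x4 + ω^2*x8) by
      rw [_root_.map_add, _root_.map_add, _root_.map_mul, _root_.map_mul, hcω, hcω2]] at hid
  have h3 := add_nonneg (add_nonneg
      (key (2*Real.cos θ) hp0 (x0+x4+x8))
      (key (2*Real.cos (θ+t)) hp1 (x0 + ω^2*x4 + ω*x8)))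
      (key (2*Real.cos (θ-t)) hp2 (x0 + ω*x4 + ω^2*x8))
  rw [hid] at h3
  have h9 : (0:ℂ) ≤ (3:ℂ)⁻¹ := by
    rw [show ((3:ℂ))⁻¹ = (((3:ℝ)⁻¹ : ℝ) : ℂ) by norm_num, Complex.zero_le_real]
    norm_num
  have h4 := mul_nonneg h9 h3
  rwa [inv_mul_cancel_left₀ (by norm_num : (3:ℂ) ≠ 0)] at h4

set_option maxHeartbeats 2000000 in
lemma aux_psd (b θ : ℝ) (hb : 0 < b) : (rho b θ).PosSemidef := by
  rw [Matrix.posSemidef_iff_dotProduct_mulVec]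
  constructor
  · have hp : star ((pTheta θ : ℝ) : ℂ) = ((pTheta θ : ℝ) : ℂ) := by
      simp [Complex.star_def, Complex.conj_ofReal]
    have hbs : star ((b : ℝ) : ℂ) = ((b : ℝ) : ℂ) := by
      simp [Complex.star_def, Complex.conj_ofReal]
    have hbi : star (1/(b:ℂ)) = 1/(b:ℂ) := by
      simp [Complex.star_def, Complex.conj_ofReal]
    have h0 : star (0:ℂ) = 0 := star_zero ℂ
    have he1 : star (-Complex.exp (-θ*Complex.I)) = -Complex.exp (θ*Complex.I) := by
      rw [star_neg, neg_inj, Complex.star_def, ← Complex.exp_conj]; congr 1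
      simp [_root_.map_mul, Complex.conj_ofReal, Complex.conj_I]
    have he2 : star (-Complex.exp (θ*Complex.I)) = -Complex.exp (-θ*Complex.I) := by
      rw [star_neg, neg_inj, Complex.star_def, ← Complex.exp_conj]; congr 1
      simp [_root_.map_mul, Complex.conj_ofReal, Complex.conj_I]
    show (rho b θ)ᴴ = rho b θ
    ext i j
    fin_cases i <;> fin_cases j <;>
      first | exact h0 | exact hp | exact hbs | exact hbi | exact he1 | exact he2
  · intro x
    have hbne : (b:ℂ) ≠ 0 := by
      simpa using ne_of_gt hb
    have hFE : Complex.exp (-(θ * Complex.I)) = (Complex.exp (θ * Complex.I))⁻¹ :=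
      Complex.exp_neg _
    have hcef : (starRingEnd ℂ) (Complex.exp (-θ * Complex.I)) = Complex.exp (θ * Complex.I) := by
      rw [← Complex.exp_conj, _root_.map_mul, _root_.map_neg, Complex.conj_ofReal, Complex.conj_I]
      ring_nf
    have hgoal : dotProduct (star x) (rho b θ *ᵥ x) =
        ((pTheta θ : ℂ) *
            ((starRingEnd ℂ) (x 0) * x 0 + (starRingEnd ℂ) (x 4) * x 4
              + (starRingEnd ℂ) (x 8) * x 8)
          - Complex.exp (θ * Complex.I) *
            ((starRingEnd ℂ) (x 0) * x 4 + (starRingEnd ℂ) (x 4) * x 8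
              + (starRingEnd ℂ) (x 8) * x 0)
          - Complex.exp (-θ * Complex.I) *
            ((starRingEnd ℂ) (x 4) * x 0 + (starRingEnd ℂ) (x 8) * x 4
              + (starRingEnd ℂ) (x 0) * x 8))
        + (b:ℂ)⁻¹ *
          (((starRingEnd ℂ) (x 1) - (b:ℂ) * Complex.exp (θ*Complex.I) * (starRingEnd ℂ) (x 3)) *
              (x 1 - (b:ℂ) * Complex.exp (-θ*Complex.I) * x 3)
            + ((b:ℂ) * (starRingEnd ℂ) (x 2) - Complex.exp (-θ*Complex.I) * (starRingEnd ℂ) (x 6)) *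
              ((b:ℂ) * x 2 - Complex.exp (θ*Complex.I) * x 6)
            + ((starRingEnd ℂ) (x 5) - (b:ℂ) * Complex.exp (θ*Complex.I) * (starRingEnd ℂ) (x 7)) *
              (x 5 - (b:ℂ) * Complex.exp (-θ*Complex.I) * x 7)) := by
      simp only [dotProduct, Matrix.mulVec, aux_sum_univ_nine, Pi.star_apply,
        Complex.star_def]
      simp [rho, Matrix.vecHead, Matrix.vecTail]
      have hEF : Complex.exp (θ*Complex.I) * Complex.exp (-(θ*Complex.I)) = 1 := by
        rw [← Complex.exp_add, show (θ:ℂ)*Complex.I + -((θ:ℂ)*Complex.I) = 0 by ring,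
          Complex.exp_zero]
      have hbb : ((b:ℝ):ℂ) * ((b:ℝ):ℂ)⁻¹ = 1 := mul_inv_cancel₀ hbne
      linear_combination ((-1)*(((b:ℝ):ℂ)⁻¹)*(x 6)*((starRingEnd ℂ) (x 6)) + (-1)*(((b:ℝ):ℂ))*(x 7)*((starRingEnd ℂ) (x 7)) + (-1)*(((b:ℝ):ℂ))*(x 3)*((starRingEnd ℂ) (x 3))) * hEF + ((-1)*(((b:ℝ):ℂ))*(x 2)*((starRingEnd ℂ) (x 2)) + (1)*(Complex.exp (-(θ*Complex.I)))*(x 7)*((starRingEnd ℂ) (x 5)) + (1)*(Complex.exp (-(θ*Complex.I)))*(x 3)*((starRingEnd ℂ) (x 1)) + (1)*(Complex.exp (-(θ*Complex.I)))*(x 2)*((starRingEnd ℂ) (x 6)) + (1)*(Complex.exp (θ*Complex.I))*(x 6)*((starRingEnd ℂ) (x 2)) + (1)*(Complex.exp (θ*Complex.I))*(x 5)*((starRingEnd ℂ) (x 7)) + (1)*(Complex.exp (θ*Complex.I))*(x 1)*((starRingEnd ℂ) (x 3)) + (-1)*(Complex.exp (θ*Complex.I))*(Complex.exp (-(θ*Complex.I)))*(((b:ℝ):ℂ))*(x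 7)*((starRingEnd ℂ) (x 7)) + (-1)*(Complex.exp (θ*Complex.I))*(Complex.exp (-(θ*Complex.I)))*(((b:ℝ):ℂ))*(x 3)*((starRingEnd ℂ) (x 3))) * hbb
    rw [hgoal]
    have hP1 : ∀ u v : ℂ, (0:ℂ) ≤
        ((starRingEnd ℂ) u - (b:ℂ) * Complex.exp (θ*Complex.I) * (starRingEnd ℂ) v) *
          (u - (b:ℂ) * Complex.exp (-θ*Complex.I) * v) := by
      intro u v
      have h1 : (starRingEnd ℂ) u - (b:ℂ) * Complex.exp (θ*Complex.I) * (starRingEnd ℂ) v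
          = (starRingEnd ℂ) (u - (b:ℂ) * Complex.exp (-θ*Complex.I) * v) := by
        rw [_root_.map_sub, _root_.map_mul, _root_.map_mul, Complex.conj_ofReal, hcef]
      rw [h1, ← Complex.normSq_eq_conj_mul_self, Complex.zero_le_real]
      exact Complex.normSq_nonneg _
    have hP2 : ∀ u v : ℂ, (0:ℂ) ≤
        ((b:ℂ) * (starRingEnd ℂ) u - Complex.exp (-θ*Complex.I) * (starRingEnd ℂ) v) *
          ((b:ℂ) * u - Complex.exp (θ*Complex.I) * v) := by
      intro u v
      have h1 : (b:ℂ) * (starRingEnd ℂ) u - Complex.exp (-θ*Complex.I) * (starRingEnd ℂ) v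
          = (starRingEnd ℂ) ((b:ℂ) * u - Complex.exp (θ*Complex.I) * v) := by
        rw [_root_.map_sub, _root_.map_mul, _root_.map_mul, Complex.conj_ofReal, ← Complex.exp_conj, _root_.map_mul,
          Complex.conj_ofReal, Complex.conj_I]
        ring_nf
      rw [h1, ← Complex.normSq_eq_conj_mul_self, Complex.zero_le_real]
      exact Complex.normSq_nonneg _
    have hbinv : (0:ℂ) ≤ (b:ℂ)⁻¹ := by
      rw [show ((b:ℂ))⁻¹ = ((b⁻¹ : ℝ) : ℂ) by push_cast; ring, Complex.zero_le_real]
      positivity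
    exact add_nonneg (aux_q3_nonneg θ (x 0) (x 4) (x 8))
      (mul_nonneg hbinv (add_nonneg (add_nonneg (hP1 (x 1) (x 3)) (hP2 (x 2) (x 6)))
        (hP1 (x 5) (x 7))))

theorem stmt5 (b θ : ℝ) (hb : 0 < b) :
    partialTranspose (rho b θ) = rho b θ ∧
      (rho b θ).PosSemidef ∧ (partialTranspose (rho b θ)).PosSemidef := by
  have hPT : partialTranspose (rho b θ) = rho b θ := by
    ext i j; fin_cases i <;> fin_cases j <;> rfl
  have hpsd := aux_psd b θ hb
  exact ⟨hPT, hpsd, by rw [hPT]; exact hpsd⟩
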